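/- Let F(G, L^{(r)}_{ℓ₁,…,ℓ_r}) denote the largest size of an L^{(r)}_{ℓ₁,…,ℓ_r}-free set in the finite abelian group G, and F(N, L^{(r)}_{ℓ₁,…,ℓ_r}) the analogous quantity for subsets of {1,…,N}. Then F(2^{k−1} n₁⋯n_k, L^{(r)}_{ℓ₁,…,ℓ_r}) ≥ F(Z_{n₁} × ⋯ × Z_{n_k}, L^{(r)}_{ℓ₁,…,ℓ_r}). -/

import Mathlib

open Pointwise

/-- `A ⊆ G` is `L^{(r)}_{ℓ₁,…,ℓ_r}`-free. -/
def LFree {G : Type*} [AddCommGroup G] [DecidableEq G] (r : ℕ) (ℓ : Fin r → ℕ)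
    (A : Set G) : Prop :=
  ∀ L : Fin r → Finset G, (∀ i, (L i).card = ℓ i) → ¬ ((↑(∑ i, L i) : Set G) ⊆ A)

/-- `F(N, L^{(r)}_{ℓ₁,…,ℓ_r})` for subsets of `{1,…,N}`. -/
noncomputable def Ffin (n r : ℕ) (ℓ : Fin r → ℕ) : ℕ :=
  sSup {k | ∃ A : Finset ℤ, (↑A : Set ℤ) ⊆ Set.Icc (1 : ℤ) n ∧ LFree r ℓ (A : Set ℤ) ∧ A.card = k}

/-- `F(G, L^{(r)}_{ℓ₁,…,ℓ_r})` for an abelian group `G`. -/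
noncomputable def Fgrp (G : Type*) [AddCommGroup G] [DecidableEq G]
    (r : ℕ) (ℓ : Fin r → ℕ) : ℕ :=
  sSup {k | ∃ A : Finset G, LFree r ℓ (A : Set G) ∧ A.card = k}

/-! ### Auxiliary mixed-radix machinery -/

/-- Mixed-radix place values with radices `2 * n' i`. -/
private def Dfun (n' : ℕ → ℕ) (i : ℕ) : ℤ := ∏ j ∈ Finset.range i, (2 * (n' j : ℤ))

private lemma Dfun_pos (n' : ℕ → ℕ) (h : ∀ i, 0 < n' i) (i : ℕ) : 0 < Dfun n' i :=
  Finset.prod_pos fun j _ => by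
    have := h j; positivity

private lemma Dfun_succ (n' : ℕ → ℕ) (i : ℕ) :
    Dfun n' (i + 1) = Dfun n' i * (2 * (n' i : ℤ)) := Finset.prod_range_succ _ _

private lemma Dfun_telescope (n' : ℕ → ℕ) (k : ℕ) :
    ∑ i ∈ Finset.range k, (2 * (n' i : ℤ) - 1) * Dfun n' i = Dfun n' k - 1 := by
  induction k with
  | zero => simp [Dfun]
  | succ k ih => rw [Finset.sum_range_succ, ih, Dfun_succ]; ring

private lemma digits_sum_bounds (n' : ℕ → ℕ) (hpos : ∀ i, 0 < n' i) (k : ℕ) (e : ℕ → ℤ)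
    (he : ∀ i, i < k → 0 ≤ e i ∧ e i < 2 * n' i) :
    0 ≤ ∑ i ∈ Finset.range k, e i * Dfun n' i ∧
      ∑ i ∈ Finset.range k, e i * Dfun n' i ≤ Dfun n' k - 1 := by
  constructor
  · exact Finset.sum_nonneg fun i hi =>
      mul_nonneg ((he i (Finset.mem_range.mp hi)).1) (Dfun_pos n' hpos i).le
  · rw [← Dfun_telescope n' k]
    exact Finset.sum_le_sum fun i hi => by
      have h1 := he i (Finset.mem_range.mp hi)
      have h2 := Dfun_pos n' hpos i
      have : e i ≤ 2 * (n' i : ℤ) - 1 := by omega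
      exact mul_le_mul_of_nonneg_right this h2.le

private lemma digits_inj (n' : ℕ → ℕ) (hpos : ∀ i, 0 < n' i) :
    ∀ (k : ℕ) (e f : ℕ → ℤ), (∀ i, i < k → 0 ≤ e i ∧ e i < 2 * n' i) →
    (∀ i, i < k → 0 ≤ f i ∧ f i < 2 * n' i) →
    (∑ i ∈ Finset.range k, e i * Dfun n' i = ∑ i ∈ Finset.range k, f i * Dfun n' i) →
    ∀ i, i < k → e i = f i := by
  intro k
  induction k with
  | zero => intro _ _ _ _ _ i hi; omega
  | succ k ih =>
    intro e f he hf hsum i hi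
    have he' : ∀ i, i < k → 0 ≤ e i ∧ e i < 2 * n' i := fun i hi => he i (by omega)
    have hf' : ∀ i, i < k → 0 ≤ f i ∧ f i < 2 * n' i := fun i hi => hf i (by omega)
    have hbe := digits_sum_bounds n' hpos k e he'
    have hbf := digits_sum_bounds n' hpos k f hf'
    rw [Finset.sum_range_succ, Finset.sum_range_succ] at hsum
    have hD := Dfun_pos n' hpos k
    have hek : e k = f k := by
      rcases lt_trichotomy (e k) (f k) with h | h | h
      · have h1 : e k + 1 ≤ f k := by omega
        have : (e k + 1) * Dfun n' k ≤ f k * Dfun n' k :=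
          mul_le_mul_of_nonneg_right h1 hD.le
        nlinarith [hbe.1, hbe.2, hbf.1, hbf.2]
      · exact h
      · have h1 : f k + 1 ≤ e k := by omega
        have : (f k + 1) * Dfun n' k ≤ e k * Dfun n' k :=
          mul_le_mul_of_nonneg_right h1 hD.le
        nlinarith [hbe.1, hbe.2, hbf.1, hbf.2]
    rcases Nat.lt_succ_iff_lt_or_eq.mp hi with hi' | rfl
    · exact ih e f he' hf' (by rw [hek] at hsum; linarith) i hi'
    · exact hek

/-! ### The key embedding lemma -/

private lemma key (k : ℕ) (n : Fin k → ℕ) (hn : ∀ i, 0 < n i) (r : ℕ) (hr : 2 ≤ r)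
    (ℓ : Fin r → ℕ) (hℓ : ∀ i, 2 ≤ ℓ i)
    (A : Finset (∀ i, ZMod (n i))) (hA : LFree r ℓ (A : Set (∀ i, ZMod (n i)))) :
    ∃ B : Finset ℤ,
      (↑B : Set ℤ) ⊆ Set.Icc (1 : ℤ) ((2 ^ (k - 1) * ∏ i, n i : ℕ) : ℤ) ∧
      LFree r ℓ (B : Set ℤ) ∧ B.card = A.card := by
  classical
  set n' : ℕ → ℕ := fun i => if h : i < k then n ⟨i, h⟩ else 1 with hn'def
  have hn' : ∀ i, 0 < n' i := by
    intro i
    simp only [hn'def]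
    split
    · exact hn _
    · exact one_pos
  set D := Dfun n' with hDdef
  set dig : (∀ i, ZMod (n i)) → ℕ → ℤ := fun x i => if h : i < k then ((x ⟨i, h⟩).val : ℤ) else 0 with hdigdef
  have hdig : ∀ x : (∀ i, ZMod (n i)), ∀ i, i < k → 0 ≤ dig x i ∧ dig x i < n' i := by
    intro x i hi
    haveI : NeZero (n ⟨i, hi⟩) := ⟨(hn _).ne'⟩
    simp only [hdigdef, hn'def, dif_pos hi]
    exact ⟨Int.natCast_nonneg _, by exact_mod_cast ZMod.val_lt _⟩
  set φ : (∀ i, ZMod (n i)) → ℤ := fun x => 1 + ∑ i ∈ Finset.range k, dig x i * D i with hφdef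
  -- the carry-free pair lemma
  have pair : ∀ a b a' b' : (∀ i, ZMod (n i)), φ a + φ b = φ a' + φ b' → a + b = a' + b' := by
    intro a b a' b' h
    have hsum : ∑ i ∈ Finset.range k, (dig a i + dig b i) * D i
        = ∑ i ∈ Finset.range k, (dig a' i + dig b' i) * D i := by
      simp only [add_mul, Finset.sum_add_distrib]
      simp only [hφdef] at h
      linarith
    have hdd := digits_inj n' hn' k (fun i => dig a i + dig b i)
      (fun i => dig a' i + dig b' i)
      (fun i hi => by
        have h1 := hdig a i hi; have h2 := hdig b i hi
        show 0 ≤ dig a i + dig b i ∧ dig a i + dig b i < 2 * n' i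
        omega)
      (fun i hi => by
        have h1 := hdig a' i hi; have h2 := hdig b' i hi
        show 0 ≤ dig a' i + dig b' i ∧ dig a' i + dig b' i < 2 * n' i
        omega)
      hsum
    funext i
    have hi : (i : ℕ) < k := i.isLt
    have hv := hdd i hi
    simp only [hdigdef, dif_pos hi, Fin.eta] at hv
    haveI : NeZero (n i) := ⟨(hn i).ne'⟩
    have hnat : (a i).val + (b i).val = (a' i).val + (b' i).val := by exact_mod_cast hv
    have hcast := congrArg (fun m : ℕ => (m : ZMod (n i))) hnat
    push_cast at hcast
    rw [ZMod.natCast_rightInverse (a i), ZMod.natCast_rightInverse (b i),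
      ZMod.natCast_rightInverse (a' i), ZMod.natCast_rightInverse (b' i)] at hcast
    simpa using hcast
  have φinj : Function.Injective φ := by
    intro a b h
    have := pair a 0 b 0 (by rw [h])
    simpa using this
  set N : ℕ := 2 ^ (k - 1) * ∏ i, n i with hNdef
  have hprodeq : ∏ j ∈ Finset.range k, (n' j : ℤ) = ((∏ i, n i : ℕ) : ℤ) := by
    push_cast
    rw [← Fin.prod_univ_eq_prod_range (fun j => (n' j : ℤ)) k]
    apply Finset.prod_congr rfl
    intro i _
    simp [hn'def, i.isLt]
  have hDk : D k = 2 ^ k * ((∏ i, n i : ℕ) : ℤ) := by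
    rw [hDdef]
    unfold Dfun
    rw [Finset.prod_mul_distrib, Finset.prod_const, Finset.card_range, hprodeq]
  have hrange : ∀ x : (∀ i, ZMod (n i)), φ x ∈ Set.Icc (1 : ℤ) (N : ℤ) := by
    intro x
    have hnn : 0 ≤ ∑ i ∈ Finset.range k, dig x i * D i :=
      Finset.sum_nonneg fun i hi =>
        mul_nonneg (hdig x i (Finset.mem_range.mp hi)).1 (Dfun_pos n' hn' i).le
    constructor
    · simp only [hφdef]; linarith
    · rcases Nat.eq_zero_or_pos k with rfl | hk
      · simp only [hφdef, hNdef]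
        simp
      · -- 2 * Σ ≤ D k - 1 - k
        have hub : ∀ i ∈ Finset.range k, 2 * (dig x i * D i) ≤ (2 * (n' i : ℤ) - 1) * D i - D i := by
          intro i hi
          have h1 := hdig x i (Finset.mem_range.mp hi)
          have h2 := Dfun_pos n' hn' i
          have h3 : 2 * dig x i ≤ 2 * (n' i : ℤ) - 2 := by omega
          nlinarith
        have hsum2 : 2 * ∑ i ∈ Finset.range k, dig x i * D i
            ≤ (D k - 1) - ∑ i ∈ Finset.range k, D i := by
          rw [Finset.mul_sum]
          calc ∑ i ∈ Finset.range k, 2 * (dig x i * D i)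
              ≤ ∑ i ∈ Finset.range k, ((2 * (n' i : ℤ) - 1) * D i - D i) :=
                Finset.sum_le_sum hub
            _ = (D k - 1) - ∑ i ∈ Finset.range k, D i := by
                rw [Finset.sum_sub_distrib, Dfun_telescope]
        have hDsum : (k : ℤ) ≤ ∑ i ∈ Finset.range k, D i := by
          calc (k : ℤ) = ∑ _i ∈ Finset.range k, 1 := by simp
            _ ≤ ∑ i ∈ Finset.range k, D i :=
              Finset.sum_le_sum fun i _ => (Dfun_pos n' hn' i)
        have h2N : 2 * (N : ℤ) = D k := by
          have hk' : k - 1 + 1 = k := by omega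
          rw [hDk, hNdef]
          push_cast
          conv_rhs => rw [show ((2 : ℤ)) ^ k = 2 ^ (k - 1 + 1) by rw [hk']]
          ring
        have hk1 : (1 : ℤ) ≤ (k : ℤ) := by exact_mod_cast hk
        simp only [hφdef]
        linarith
  set B : Finset ℤ := A.image φ with hBdef
  refine ⟨B, ?_, ?_, Finset.card_image_of_injective _ φinj⟩
  · intro b hb
    simp only [hBdef, Finset.coe_image, Set.mem_image, Finset.mem_coe] at hb
    obtain ⟨a, _, rfl⟩ := hb
    exact hrange a
  · -- B is LFree
    intro L hL hsub
    haveI : NeZero r := ⟨by omega⟩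
    have hLne : ∀ j, ∃ x, x ∈ L j := fun j =>
      Finset.card_pos.mp (by rw [hL j]; have := hℓ j; omega)
    choose c hc using hLne
    have hmem : ∀ m : Fin r → ℤ, (∀ j, m j ∈ L j) → ∃ a ∈ A, φ a = ∑ j, m j := by
      intro m hm
      have h1 : (∑ j, m j) ∈ (↑(∑ j, L j) : Set ℤ) := by
        rw [Finset.coe_sum, Set.mem_fintype_sum]
        exact ⟨m, fun j => hm j, rfl⟩
      have h2 := hsub h1
      simp only [hBdef, Finset.coe_image, Set.mem_image, Finset.mem_coe] at h2
      obtain ⟨a, ha, he⟩ := h2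
      exact ⟨a, ha, he⟩
    set δ : ℤ → (∀ i, ZMod (n i)) := fun b => if h : ∃ a ∈ A, φ a = b then h.choose else 0 with hδdef
    have hδA : ∀ b, (∃ a ∈ A, φ a = b) → δ b ∈ A := by
      intro b h; simp only [hδdef, dif_pos h]; exact h.choose_spec.1
    have hδφ : ∀ b, (∃ a ∈ A, φ a = b) → φ (δ b) = b := by
      intro b h; simp only [hδdef, dif_pos h]; exact h.choose_spec.2
    have pairδ : ∀ p q p' q' : ℤ, (∃ a ∈ A, φ a = p) → (∃ a ∈ A, φ a = q) →
        (∃ a ∈ A, φ a = p') → (∃ a ∈ A, φ a = q') → p + q = p' + q' →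
        δ p + δ q = δ p' + δ q' := by
      intro p q p' q' h1 h2 h3 h4 h
      exact pair _ _ _ _ (by rw [hδφ p h1, hδφ q h2, hδφ p' h3, hδφ q' h4]; exact h)
    set S : Fin r → ℤ → ℤ := fun j x => x + ∑ t ∈ Finset.univ.erase j, c t with hSdef
    have hSpre : ∀ j x, x ∈ L j → ∃ a ∈ A, φ a = S j x := by
      intro j x hx
      have hSsum : S j x = ∑ t, Function.update c j x t := by
        rw [Finset.sum_update_of_mem (Finset.mem_univ j), Finset.sdiff_singleton_eq_erase]
      rw [hSsum]
      refine hmem (Function.update c j x) ?_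
      intro t
      rcases eq_or_ne t j with rfl | hne
      · rwa [Function.update_self]
      · rw [Function.update_of_ne hne]; exact hc t
    set S₀ : ℤ := ∑ t, c t with hS0def
    have hS0pre : ∃ a ∈ A, φ a = S₀ := hmem c hc
    -- main additive lemma
    have main : ∀ m : Fin r → ℤ, (∀ j, m j ∈ L j) →
        δ (∑ j, m j) = δ S₀ + ∑ j, (δ (S j (m j)) - δ S₀) := by
      intro m hm
      set T : ℕ → ℤ := fun s => ∑ j : Fin r, (if (j : ℕ) < s then m j else c j) with hTdef
      have hTpre : ∀ s, ∃ a ∈ A, φ a = T s := by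
        intro s
        refine hmem (fun j => if (j : ℕ) < s then m j else c j) ?_
        intro j
        show (if (j : ℕ) < s then m j else c j) ∈ L j
        split
        · exact hm j
        · exact hc j
      have claim : ∀ s, s ≤ r →
          δ (T s) = δ S₀ + ∑ j ∈ Finset.univ.filter (fun j : Fin r => (j : ℕ) < s),
            (δ (S j (m j)) - δ S₀) := by
        intro s
        induction s with
        | zero =>
          intro _
          have hf0 : Finset.univ.filter (fun j : Fin r => (j : ℕ) < 0) = ∅ :=
            Finset.filter_false_of_mem fun j _ => by omega
          have hT0 : T 0 = S₀ := by
            show (∑ j : Fin r, if (j : ℕ) < 0 then m j else c j) = ∑ t, c t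
            exact Finset.sum_congr rfl fun j _ => by rw [if_neg (by omega)]
          rw [hf0, hT0]
          simp
        | succ s ih =>
          intro hs
          have hs' : s < r := hs
          set j₀ : Fin r := ⟨s, hs'⟩ with hj₀
          have hfil : Finset.univ.filter (fun j : Fin r => (j : ℕ) < s + 1)
              = insert j₀ (Finset.univ.filter (fun j : Fin r => (j : ℕ) < s)) := by
            ext j
            simp only [Finset.mem_filter, Finset.mem_insert, Finset.mem_univ, true_and]
            constructor
            · intro h
              rcases Nat.lt_succ_iff_lt_or_eq.mp h with h | h
              · exact Or.inr h
              · exact Or.inl (Fin.ext h)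
            · rintro (rfl | h)
              · simp [hj₀]
              · omega
          have hj₀fil : j₀ ∉ Finset.univ.filter (fun j : Fin r => (j : ℕ) < s) := by
            simp [hj₀]
          have hE : ∑ j ∈ Finset.univ.erase j₀, (if (j : ℕ) < s + 1 then m j else c j)
              = ∑ j ∈ Finset.univ.erase j₀, (if (j : ℕ) < s then m j else c j) := by
            apply Finset.sum_congr rfl
            intro j hj
            have hne : (j : ℕ) ≠ s := fun h => (Finset.mem_erase.mp hj).1 (Fin.ext h)
            have hiff : ((j : ℕ) < s + 1) ↔ ((j : ℕ) < s) := by omega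
            simp [hiff]
          have e1 : T (s + 1) = m j₀ + ∑ j ∈ Finset.univ.erase j₀,
              (if (j : ℕ) < s then m j else c j) := by
            show (∑ j : Fin r, if (j : ℕ) < s + 1 then m j else c j) = _
            rw [← Finset.add_sum_erase Finset.univ
              (fun j : Fin r => if (j : ℕ) < s + 1 then m j else c j) (Finset.mem_univ j₀), hE]
            congr 1
            simp [hj₀]
          have e2 : T s = c j₀ + ∑ j ∈ Finset.univ.erase j₀,
              (if (j : ℕ) < s then m j else c j) := by
            show (∑ j : Fin r, if (j : ℕ) < s then m j else c j) = _
            rw [← Finset.add_sum_erase Finset.univ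
              (fun j : Fin r => if (j : ℕ) < s then m j else c j) (Finset.mem_univ j₀)]
            congr 1
            simp [hj₀]
          have e4 : S₀ = c j₀ + ∑ t ∈ Finset.univ.erase j₀, c t := by
            show (∑ t : Fin r, c t) = _
            exact (Finset.add_sum_erase Finset.univ c (Finset.mem_univ j₀)).symm
          have e3 : S j₀ (m j₀) = m j₀ + ∑ t ∈ Finset.univ.erase j₀, c t := rfl
          have hkey : T (s + 1) + S₀ = T s + S j₀ (m j₀) := by
            rw [e1, e2, e3, e4]
            ring
          have hstep := pairδ (T (s + 1)) S₀ (T s) (S j₀ (m j₀)) (hTpre _) hS0pre (hTpre _)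
            (hSpre j₀ (m j₀) (hm j₀)) hkey
          rw [hfil, Finset.sum_insert hj₀fil]
          have hT1 : δ (T (s + 1)) = (δ (T s) + δ (S j₀ (m j₀))) - δ S₀ :=
            eq_sub_of_add_eq hstep
          rw [hT1, ih (by omega)]
          abel
      have h1 := claim r le_rfl
      have hTr : T r = ∑ j, m j := by
        show (∑ j : Fin r, if (j : ℕ) < r then m j else c j) = ∑ j, m j
        exact Finset.sum_congr rfl fun j _ => by rw [if_pos j.isLt]
      have hfilr : Finset.univ.filter (fun j : Fin r => (j : ℕ) < r) = Finset.univ :=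
        Finset.filter_true_of_mem fun j _ => j.isLt
      rw [hTr, hfilr] at h1
      exact h1
    have hδinj : ∀ p q : ℤ, (∃ a ∈ A, φ a = p) → (∃ a ∈ A, φ a = q) → δ p = δ q → p = q := by
      intro p q h1 h2 h
      rw [← hδφ p h1, ← hδφ q h2, h]
    set L' : Fin r → Finset (∀ i, ZMod (n i)) := fun j =>
      (L j).image (fun x => δ (S j x) - δ S₀ + if j = 0 then δ S₀ else 0) with hL'def
    refine hA L' ?_ ?_
    · intro j
      rw [hL'def]
      dsimp only
      rw [Finset.card_image_of_injOn, hL j]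
      intro x hx y hy hxy
      dsimp only at hxy
      have h1 : δ (S j x) = δ (S j y) := by
        have h0 := add_right_cancel hxy
        exact sub_left_inj.mp h0
      have h2 : S j x = S j y := hδinj _ _ (hSpre j x hx) (hSpre j y hy) h1
      have h3 : x + ∑ t ∈ Finset.univ.erase j, c t = y + ∑ t ∈ Finset.univ.erase j, c t := h2
      exact add_right_cancel h3
    · intro g hg
      rw [Finset.coe_sum, Set.mem_fintype_sum] at hg
      obtain ⟨gg, hgg, rfl⟩ := hg
      have hget : ∀ j, ∃ x ∈ L j,
          δ (S j x) - δ S₀ + (if j = 0 then δ S₀ else 0) = gg j := by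
        intro j
        have := hgg j
        rw [hL'def] at this
        exact Finset.mem_image.mp this
      choose x hx hgx using hget
      have hsumeq : ∑ j, gg j = δ (∑ j, x j) := by
        rw [main x hx]
        rw [← Finset.sum_congr rfl (fun j _ => hgx j)]
        rw [Finset.sum_add_distrib]
        rw [Finset.sum_ite_eq' Finset.univ (0 : Fin r) (fun _ => δ S₀)]
        simp [add_comm]
      rw [hsumeq]
      exact Finset.mem_coe.mpr (hδA _ (hmem x hx))

/-- `F(2^{k−1} n₁⋯n_k, L^{(r)}_{ℓ₁,…,ℓ_r}) ≥
F(Z_{n₁} × ⋯ × Z_{n_k}, L^{(r)}_{ℓ₁,…,ℓ_r})`. -/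
theorem stmt12 (k : ℕ) (n : Fin k → ℕ) (hn : ∀ i, 0 < n i)
    (r : ℕ) (hr : 2 ≤ r) (ℓ : Fin r → ℕ) (hℓ : ∀ i, 2 ≤ ℓ i) (hmono : Monotone ℓ) :
    Fgrp (∀ i, ZMod (n i)) r ℓ ≤ Ffin (2 ^ (k - 1) * ∏ i, n i) r ℓ := by
  classical
  set N : ℕ := 2 ^ (k - 1) * ∏ i, n i with hNdef
  have hbdd : BddAbove {m | ∃ B : Finset ℤ,
      (↑B : Set ℤ) ⊆ Set.Icc (1 : ℤ) (N : ℤ) ∧ LFree r ℓ (B : Set ℤ) ∧ B.card = m} := by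
    refine ⟨(Finset.Icc (1 : ℤ) (N : ℤ)).card, ?_⟩
    rintro m ⟨B, hB, _, rfl⟩
    exact Finset.card_le_card (Finset.coe_subset.mp (by rw [Finset.coe_Icc]; exact hB))
  have hempty : LFree r ℓ ((∅ : Finset (∀ i, ZMod (n i))) : Set (∀ i, ZMod (n i))) := by
    intro L hL hsub
    have hLne : ∀ j, ∃ x, x ∈ L j := fun j =>
      Finset.card_pos.mp (by rw [hL j]; have := hℓ j; omega)
    choose m hm using hLne
    have hmem : ∑ j, m j ∈ (↑(∑ j, L j) : Set (∀ i, ZMod (n i))) := by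
      rw [Finset.coe_sum, Set.mem_fintype_sum]
      exact ⟨m, hm, rfl⟩
    have := hsub hmem
    simp at this
  refine csSup_le_csSup hbdd ⟨0, ∅, hempty, by simp⟩ ?_
  rintro m ⟨A, hA, rfl⟩
  obtain ⟨B, hB1, hB2, hB3⟩ := key k n hn r hr ℓ hℓ A hA
  exact ⟨B, hB1, hB2, hB3⟩
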